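/- Let Φ : A × S → S × A be a finite state transducer. Set C = A ⊔ S, and let T be the Wang tileset over C consisting of: for each a ∈ A and s ∈ S with Φ(a, s) = (s′, a′), a tile with (N, E, S, W)-colours (s′, a′, s, a); and for each pair (c, d) ∈ C² \ (S × A), a tile with (N, E, S, W)-colours (c, d, c, d). Then T is SE,SW-complete, and for every state s ∈ S the following are equivalent: (i) there exists n ∈ ℕ such that every tiling of the upper half-plane by T with the colour s on every south edge of its bottom row is horizontally n-periodic; (ii) s has finite order in the automata group ⟨Φ⟩. -/

import Mathlib

/-!
Common framework: finite state (Mealy) transducers and the automata groups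
they generate, acting on infinite sequences.
-/

namespace AutomataPaper

variable {A S : Type*}

/-- The state reached after processing a finite input word, where
`f a s = (s', a')` means: in state `s`, on input letter `a`, the transducer
moves to state `s'` and outputs the letter `a'`. -/
def run (f : A → S → S × A) : S → List A → S
  | s, [] => s
  | s, a :: w => run f (f a s).1 w

theorem run_append (f : A → S → S × A) (s : S) (u v : List A) :
    run f s (u ++ v) = run f (run f s u) v := by
  induction u generalizing s with
  | nil => rfl
  | cons a u ih => simpa [run] using ih _

/-- The action of the state `s` on infinite sequences over the alphabet. -/
def seqAct (f : A → S → S × A) (s : S) (w : ℕ → A) : ℕ → A := fun n =>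
  (f (w n) (run f s (List.ofFn fun i : Fin n => w i))).2

/-- A valid finite-state transducer: for every state, the output-letter map
is a bijection of the alphabet. -/
def IsFST (f : A → S → S × A) : Prop :=
  ∀ s : S, Function.Bijective fun a => (f a s).2

theorem seqAct_bijective (f : A → S → S × A) (hf : IsFST f) (s : S) :
    Function.Bijective (seqAct f s) := by
  classical
  constructor
  · intro w w' h
    funext n
    induction n using Nat.strong_induction_on with
    | _ n ih =>
      have hfun : (fun i : Fin n => w i) = fun i : Fin n => w' i :=
        funext fun i => ih i i.isLt
      have hn := congrFun h n
      simp only [seqAct, hfun] at hn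
      have := (hf (run f s (List.ofFn fun i : Fin n => w' i))).injective
      exact this hn
  · intro v
    let e : S → A ≃ A := fun q => Equiv.ofBijective _ (hf q)
    let p : ℕ → S := fun n => Nat.rec s (fun m q => (f ((e q).symm (v m)) q).1) n
    let w : ℕ → A := fun n => (e (p n)).symm (v n)
    have hrun : ∀ n : ℕ, run f s (List.ofFn fun i : Fin n => w i) = p n := by
      intro n
      induction n with
      | zero => rfl
      | succ m ih =>
        have hsplit : (List.ofFn fun i : Fin (m + 1) => w i)
            = (List.ofFn fun i : Fin m => w i) ++ [w m] := by
          rw [List.ofFn_succ']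
          simp
        rw [hsplit, run_append, ih]
        rfl
    refine ⟨w, ?_⟩
    funext n
    show (f (w n) (run f s (List.ofFn fun i : Fin n => w i))).2 = v n
    rw [hrun]
    exact (e (p n)).apply_symm_apply (v n)

/-- The permutation of the set of infinite sequences induced by a state. -/
noncomputable def statePerm (f : A → S → S × A) (hf : IsFST f) (s : S) :
    Equiv.Perm (ℕ → A) :=
  Equiv.ofBijective (seqAct f s) (seqAct_bijective f hf s)

/-- The automata group generated by a finite state transducer: the subgroup of
the permutation group of `A^∞` generated by the actions of the states. -/
noncomputable def autGroup (f : A → S → S × A) (hf : IsFST f) :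
    Subgroup (Equiv.Perm (ℕ → A)) :=
  Subgroup.closure (Set.range (statePerm f hf))

/-- Prepending a letter to an infinite sequence. -/
def scons (a : A) (v : ℕ → A) : ℕ → A := fun n =>
  match n with
  | 0 => a
  | n + 1 => v n

/-- Prepending a finite word to an infinite sequence. -/
def lappend (u : List A) (v : ℕ → A) : ℕ → A := fun n =>
  if h : n < u.length then u.get ⟨n, h⟩ else v (n - u.length)

/-- `IsStateSeq g h u` says that `h` is the state (section) `g@u` of `g` at the
finite word `u`: `g` maps sequences starting with `u` to sequences starting with
a fixed word `u'` of the same length, acting as `h` on the tail. -/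
def IsStateSeq (g h : Equiv.Perm (ℕ → A)) (u : List A) : Prop :=
  ∃ u' : List A, u'.length = u.length ∧ ∀ v : ℕ → A, g (lappend u v) = lappend u' (h v)

end AutomataPaper

namespace AutomataPaper

variable {C : Type*}

/-- A Wang tile over the colour set `C`, with colours `(N, E, S, W)`. -/
abbrev WTile (C : Type*) : Type _ := C × C × C × C

def tN (u : WTile C) : C := u.1
def tE (u : WTile C) : C := u.2.1
def tS (u : WTile C) : C := u.2.2.1
def tW (u : WTile C) : C := u.2.2.2

/-- A tileset is `SE`- and `SW`-complete: for every pair of colours there is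
exactly one tile with these south and east (resp. south and west) colours. -/
def SESWComplete (T : Set (WTile C)) : Prop :=
  (∀ c d : C, ∃! u : WTile C, u ∈ T ∧ tS u = c ∧ tE u = d) ∧
  (∀ c d : C, ∃! u : WTile C, u ∈ T ∧ tS u = c ∧ tW u = d)

/-- A valid tiling of the upper half-plane by the tileset `T`. -/
def IsTiling (T : Set (WTile C)) (t : ℤ → ℕ → WTile C) : Prop :=
  ∀ (x : ℤ) (y : ℕ), t x y ∈ T ∧
    tN (t x y) = tS (t x (y + 1)) ∧ tE (t x y) = tW (t (x + 1) y)

/-- The tiling has the colour `c` on every south edge of its bottom row,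
i.e. `c^∞` on the horizontal axis. -/
def BottomRow (t : ℤ → ℕ → WTile C) (c : C) : Prop :=
  ∀ x : ℤ, tS (t x 0) = c

/-- The tiling is horizontally `n`-periodic. -/
def HorizPeriodic (t : ℤ → ℕ → WTile C) (n : ℕ) : Prop :=
  ∀ (x : ℤ) (y : ℕ), t (x + (n : ℤ)) y = t x y

end AutomataPaper

namespace AutomataPaper

variable {A S : Type*}

/-- The Wang tileset associated with a finite state transducer: over the colour
set `C = A ⊔ S`, one tile with `(N, E, S, W)`-colours `(s', a', s, a)` for every
transition `Φ(a, s) = (s', a')`, and one tile `(c, d, c, d)` for every pair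
`(c, d) ∈ C² \ (S × A)`. -/
def transducerTiles (f : A → S → S × A) : Set (WTile (A ⊕ S)) :=
  {u | ∃ (a : A) (s : S),
      u = (Sum.inr (f a s).1, Sum.inl (f a s).2, Sum.inr s, Sum.inl a)} ∪
  {u | ∃ c d : A ⊕ S,
      (¬ ∃ (s : S) (a : A), c = Sum.inr s ∧ d = Sum.inl a) ∧ u = (c, d, c, d)}

/-! ### Auxiliary machinery -/

theorem run_ofFn_succ {B : Type*} (g : B → S → S × B) (q : S) (w : ℕ → B) (y : ℕ) :
    run g q (List.ofFn fun i : Fin (y + 1) => w i)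
      = (g (w y) (run g q (List.ofFn fun i : Fin y => w i))).1 := by
  have h : (List.ofFn fun i : Fin (y + 1) => w i)
      = (List.ofFn fun i : Fin y => w i) ++ [w y] := by
    rw [List.ofFn_succ']; simp
  rw [h, run_append]; rfl

/-- The extension of a transducer to the alphabet `A ⊕ S`, where letters from
`S` are passed through unchanged without affecting the state. -/
def extF (f : A → S → S × A) : (A ⊕ S) → S → S × (A ⊕ S)
  | Sum.inl a, q => ((f a q).1, Sum.inl (f a q).2)
  | Sum.inr c, q => (q, Sum.inr c)

/-- Number of `none`s among `m 0, …, m (y-1)`. -/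
def cnt {β : Type*} (m : ℕ → Option β) : ℕ → ℕ
  | 0 => 0
  | y + 1 => cnt m y + (if (m y).isNone then 1 else 0)

theorem cnt_mono {β : Type*} (m : ℕ → Option β) : Monotone (cnt m) :=
  monotone_nat_of_le_succ fun y => by cases h : (m y).isNone <;> simp [cnt, h]

theorem cnt_inj {β : Type*} {m : ℕ → Option β} {y y' : ℕ} (hy : m y = none)
    (hy' : m y' = none) (h : cnt m y = cnt m y') : y = y' := by
  rcases lt_trichotomy y y' with hlt | he | hlt
  · have h1 : cnt m (y + 1) ≤ cnt m y' := cnt_mono m hlt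
    simp [cnt, hy] at h1; omega
  · exact he
  · have h1 : cnt m (y' + 1) ≤ cnt m y := cnt_mono m hlt
    simp [cnt, hy'] at h1; omega

/-- Interleave a sequence of letters from `A` into the `none` positions of a
mask `m`. -/
def merge {β : Type*} (m : ℕ → Option β) (w : ℕ → A) : ℕ → A ⊕ β := fun y =>
  match m y with
  | some c => Sum.inr c
  | none => Sum.inl (w (cnt m y))

theorem merge_exists {β : Type*} [Nonempty A] (ω : ℕ → A ⊕ β) :
    ∃ (m : ℕ → Option β) (w : ℕ → A), ω = merge m w := by
  classical
  set m : ℕ → Option β := fun y => Sum.getRight? (ω y) with hm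
  refine ⟨m, fun k =>
    if h : ∃ y, m y = none ∧ cnt m y = k ∧ ∃ a, ω y = Sum.inl a
    then h.choose_spec.2.2.choose else Classical.arbitrary A, ?_⟩
  funext y
  cases hωy : ω y with
  | inl a =>
    have hmy : m y = none := by simp [hm, hωy]
    have hex : ∃ y', m y' = none ∧ cnt m y' = cnt m y ∧ ∃ a', ω y' = Sum.inl a' :=
      ⟨y, hmy, rfl, a, hωy⟩
    simp only [merge, hmy]
    rw [dif_pos hex]
    have h3 := hex.choose_spec.2.2.choose_spec
    have hy0 : hex.choose = y := cnt_inj hex.choose_spec.1 hmy hex.choose_spec.2.1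
    have h4 : (Sum.inl a : A ⊕ β) = ω hex.choose := by rw [hy0, hωy]
    exact h4.trans h3
  | inr c =>
    have hmy : m y = some c := by simp [hm, hωy]
    simp [merge, hmy]

theorem run_extF_merge (f : A → S → S × A) (s : S) (m : ℕ → Option S)
    (w : ℕ → A) (y : ℕ) :
    run (extF f) s (List.ofFn fun i : Fin y => merge m w i)
      = run f s (List.ofFn fun i : Fin (cnt m y) => w i) := by
  induction y with
  | zero => rfl
  | succ y ih =>
    rw [run_ofFn_succ]
    cases hmy : m y with
    | none =>
      have hc : cnt m (y + 1) = cnt m y + 1 := by simp [cnt, hmy]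
      rw [hc, run_ofFn_succ, ih]
      simp [merge, hmy, extF]
    | some c =>
      have hc : cnt m (y + 1) = cnt m y := by simp [cnt, hmy]
      rw [hc, ih]
      simp [merge, hmy, extF]

theorem seqAct_extF_merge (f : A → S → S × A) (s : S) (m : ℕ → Option S)
    (w : ℕ → A) :
    seqAct (extF f) s (merge m w) = merge m (seqAct f s w) := by
  funext y
  cases hmy : m y with
  | some c => simp [seqAct, merge, hmy, extF]
  | none =>
    simp only [seqAct]
    rw [run_extF_merge]
    simp [merge, hmy, extF, seqAct]

theorem iterate_seqAct_extF_merge (f : A → S → S × A) (s : S) (m : ℕ → Option S)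
    (w : ℕ → A) (k : ℕ) :
    (seqAct (extF f) s)^[k] (merge m w) = merge m ((seqAct f s)^[k] w) := by
  induction k with
  | zero => rfl
  | succ k ih =>
    rw [Function.iterate_succ_apply', Function.iterate_succ_apply', ih,
      seqAct_extF_merge]

theorem seqAct_extF_of_isEmpty [IsEmpty A] (f : A → S → S × A) (s : S)
    (ω : ℕ → A ⊕ S) : seqAct (extF f) s ω = ω := by
  funext y
  cases hωy : ω y with
  | inl a => exact isEmptyElim a
  | inr c => simp [seqAct, hωy, extF]

theorem tile_shape {f : A → S → S × A} {u : WTile (A ⊕ S)} {q : S}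
    (hu : u ∈ transducerTiles f) (hS : tS u = Sum.inr q) :
    u = (Sum.inr (extF f (tW u) q).1, (extF f (tW u) q).2, Sum.inr q, tW u) := by
  rcases hu with ⟨a, s₀, rfl⟩ | ⟨c, d, hnd, rfl⟩
  · have hq : s₀ = q := Sum.inr_injective hS
    subst hq
    rfl
  · have hc : c = Sum.inr q := hS
    cases d with
    | inl a => exact absurd ⟨q, a, hc, rfl⟩ hnd
    | inr c' => subst hc; rfl

theorem tS_run {f : A → S → S × A} {t : ℤ → ℕ → WTile (A ⊕ S)} {s : S}
    (ht : IsTiling (transducerTiles f) t) (hbr : BottomRow t (Sum.inr s))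
    (x : ℤ) (y : ℕ) :
    tS (t x y) = Sum.inr (run (extF f) s (List.ofFn fun i : Fin y => tW (t x i))) := by
  induction y with
  | zero => simpa [run] using hbr x
  | succ y ih =>
    rw [← (ht x y).2.1, run_ofFn_succ (extF f) s (fun i => tW (t x i)) y]
    rw [tile_shape (ht x y).1 ih]
    rfl

theorem tW_step {f : A → S → S × A} {t : ℤ → ℕ → WTile (A ⊕ S)} {s : S}
    (ht : IsTiling (transducerTiles f) t) (hbr : BottomRow t (Sum.inr s))
    (x : ℤ) :
    (fun y => tW (t (x + 1) y)) = seqAct (extF f) s (fun y => tW (t x y)) := by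
  funext y
  rw [← (ht x y).2.2]
  rw [tile_shape (ht x y).1 (tS_run ht hbr x y)]
  rfl

theorem tW_iter {f : A → S → S × A} {t : ℤ → ℕ → WTile (A ⊕ S)} {s : S}
    (ht : IsTiling (transducerTiles f) t) (hbr : BottomRow t (Sum.inr s))
    (x : ℤ) (k : ℕ) :
    (fun y => tW (t (x + (k : ℤ)) y))
      = (seqAct (extF f) s)^[k] (fun y => tW (t x y)) := by
  induction k with
  | zero => simp
  | succ k ih =>
    have hx : (x + ((k + 1 : ℕ) : ℤ)) = (x + (k : ℤ)) + 1 := by push_cast; ring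
    rw [hx, Function.iterate_succ_apply', ← ih, tW_step ht hbr]

end AutomataPaper

namespace AutomataPaper
variable {A S : Type*}


/-! ### A canonical tiling built from the orbit of a sequence -/

/-- The west colours of the columns of the canonical tiling: column `x`
carries the sequence `s^x · w`. -/
noncomputable def colW (f : A → S → S × A) (hb : IsFST f) (s : S) (w : ℕ → A)
    (x : ℤ) : ℕ → A :=
  ((statePerm f hb s) ^ x) w

noncomputable def colQ (f : A → S → S × A) (hb : IsFST f) (s : S) (w : ℕ → A)
    (x : ℤ) (y : ℕ) : S :=
  run f s (List.ofFn fun i : Fin y => colW f hb s w x i)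

noncomputable def colT (f : A → S → S × A) (hb : IsFST f) (s : S) (w : ℕ → A)
    (x : ℤ) (y : ℕ) : WTile (A ⊕ S) :=
  (Sum.inr (f (colW f hb s w x y) (colQ f hb s w x y)).1,
   Sum.inl (f (colW f hb s w x y) (colQ f hb s w x y)).2,
   Sum.inr (colQ f hb s w x y), Sum.inl (colW f hb s w x y))

theorem colW_succ (f : A → S → S × A) (hb : IsFST f) (s : S) (w : ℕ → A)
    (x : ℤ) : colW f hb s w (x + 1) = seqAct f s (colW f hb s w x) := by
  show ((statePerm f hb s) ^ (x + 1)) w = _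
  rw [add_comm, zpow_add, zpow_one, Equiv.Perm.mul_apply]
  rfl

theorem colT_tiling (f : A → S → S × A) (hb : IsFST f) (s : S) (w : ℕ → A) :
    IsTiling (transducerTiles f) (colT f hb s w) := by
  intro x y
  refine ⟨Or.inl ⟨_, _, rfl⟩, ?_, ?_⟩
  · show Sum.inr (f (colW f hb s w x y) (colQ f hb s w x y)).1
      = Sum.inr (colQ f hb s w x (y + 1))
    rw [show colQ f hb s w x (y + 1) = (f (colW f hb s w x y) (colQ f hb s w x y)).1
      from run_ofFn_succ f s (colW f hb s w x) y]
  · show Sum.inl (f (colW f hb s w x y) (colQ f hb s w x y)).2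
      = Sum.inl (colW f hb s w (x + 1) y)
    rw [colW_succ]
    rfl

theorem colT_bottom (f : A → S → S × A) (hb : IsFST f) (s : S) (w : ℕ → A) :
    BottomRow (colT f hb s w) (Sum.inr s) := by
  intro x
  show Sum.inr (colQ f hb s w x 0) = Sum.inr s
  unfold colQ
  rw [List.ofFn_zero]
  rfl

theorem colT_tW (f : A → S → S × A) (hb : IsFST f) (s : S) (w : ℕ → A)
    (x : ℤ) (y : ℕ) :
    tW (colT f hb s w x y) = Sum.inl (((statePerm f hb s) ^ x) w y) := rfl

/-- **Transducers and tilings.**  The tileset associated with a finite state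
transducer `Φ` is `SE,SW`-complete, and for every state `s` the following are
equivalent: (i) there is an `n` such that every tiling of the upper half-plane
with the colour `s` on the horizontal axis is horizontally `n`-periodic;
(ii) `s` has finite order in the automata group `⟨Φ⟩`. -/
theorem transducer_tiles_periodic_iff_finite_order
    [Fintype A] [Fintype S] (f : A → S → S × A) (hb : IsFST f) :
    SESWComplete (transducerTiles f) ∧
    ∀ s : S,
      ((∃ n : ℕ, 0 < n ∧
          ∀ t : ℤ → ℕ → WTile (A ⊕ S),
            IsTiling (transducerTiles f) t → BottomRow t (Sum.inr s) →
              HorizPeriodic t n)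
        ↔ IsOfFinOrder (statePerm f hb s)) := by
  constructor
  · constructor
    · intro c d
      by_cases hcd : ∃ (s₀ : S) (a' : A), c = Sum.inr s₀ ∧ d = Sum.inl a'
      · obtain ⟨s₀, a', rfl, rfl⟩ := hcd
        set e := Equiv.ofBijective _ (hb s₀) with he
        refine ⟨(Sum.inr (f (e.symm a') s₀).1, Sum.inl (f (e.symm a') s₀).2,
          Sum.inr s₀, Sum.inl (e.symm a')), ⟨Or.inl ⟨e.symm a', s₀, rfl⟩, rfl, ?_⟩, ?_⟩
        · show Sum.inl (f (e.symm a') s₀).2 = Sum.inl a'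
          have h1 : (f (e.symm a') s₀).2 = e (e.symm a') := rfl
          rw [h1, e.apply_symm_apply]
        · rintro u ⟨hu, hS, hE⟩
          rcases hu with ⟨a₁, s₁, rfl⟩ | ⟨c₁, d₁, hnd, rfl⟩
          · have hs : s₁ = s₀ := Sum.inr_injective hS
            subst hs
            have ha : (f a₁ s₁).2 = a' := Sum.inl_injective hE
            have ha2 : a₁ = e.symm a' := by
              apply e.injective
              rw [e.apply_symm_apply]
              exact ha
            rw [ha2]
          · exact absurd ⟨s₀, a', hS, hE⟩ hnd
      · refine ⟨(c, d, c, d), ⟨Or.inr ⟨c, d, hcd, rfl⟩, rfl, rfl⟩, ?_⟩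
        rintro u ⟨hu, hS, hE⟩
        rcases hu with ⟨a₁, s₁, rfl⟩ | ⟨c₁, d₁, hnd, rfl⟩
        · exact absurd ⟨s₁, (f a₁ s₁).2, hS.symm, hE.symm⟩ hcd
        · have h1 : c₁ = c := hS
          have h2 : d₁ = d := hE
          rw [h1, h2]
    · intro c d
      by_cases hcd : ∃ (s₀ : S) (a : A), c = Sum.inr s₀ ∧ d = Sum.inl a
      · obtain ⟨s₀, a, rfl, rfl⟩ := hcd
        refine ⟨(Sum.inr (f a s₀).1, Sum.inl (f a s₀).2, Sum.inr s₀, Sum.inl a),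
          ⟨Or.inl ⟨a, s₀, rfl⟩, rfl, rfl⟩, ?_⟩
        rintro u ⟨hu, hS, hW⟩
        rcases hu with ⟨a₁, s₁, rfl⟩ | ⟨c₁, d₁, hnd, rfl⟩
        · have hs : s₁ = s₀ := Sum.inr_injective hS
          have ha : a₁ = a := Sum.inl_injective hW
          rw [hs, ha]
        · exact absurd ⟨s₀, a, hS, hW⟩ hnd
      · refine ⟨(c, d, c, d), ⟨Or.inr ⟨c, d, hcd, rfl⟩, rfl, rfl⟩, ?_⟩
        rintro u ⟨hu, hS, hW⟩
        rcases hu with ⟨a₁, s₁, rfl⟩ | ⟨c₁, d₁, hnd, rfl⟩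
        · exact absurd ⟨s₁, a₁, hS.symm, hW.symm⟩ hcd
        · have h1 : c₁ = c := hS
          have h2 : d₁ = d := hW
          rw [h1, h2]
  · intro s
    constructor
    · rintro ⟨n, hn, hper⟩
      rw [isOfFinOrder_iff_pow_eq_one]
      refine ⟨n, hn, ?_⟩
      apply Equiv.ext
      intro w
      funext y
      have hp := hper (colT f hb s w) (colT_tiling f hb s w) (colT_bottom f hb s w) 0 y
      have h2 := congrArg tW hp
      rw [colT_tW, colT_tW] at h2
      have h3 := Sum.inl_injective h2
      simpa [zpow_natCast] using h3
    · intro hfin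
      refine ⟨orderOf (statePerm f hb s), hfin.orderOf_pos, ?_⟩
      set n := orderOf (statePerm f hb s) with hn
      have hpow : statePerm f hb s ^ n = 1 := pow_orderOf_eq_one _
      have H : ∀ v : ℕ → A, (seqAct f s)^[n] v = v := by
        intro v
        have h1 : (⇑(statePerm f hb s))^[n] v = v := by
          rw [← Equiv.Perm.coe_pow, hpow]
          rfl
        exact h1
      have Hext : ∀ ω : ℕ → A ⊕ S, (seqAct (extF f) s)^[n] ω = ω := by
        intro ω
        rcases isEmpty_or_nonempty A with hA | hA
        · exact Function.iterate_fixed (seqAct_extF_of_isEmpty f s ω) n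
        · obtain ⟨m, v, rfl⟩ := merge_exists ω
          rw [iterate_seqAct_extF_merge, H]
      intro t ht hbr x y
      have hW : (fun y => tW (t (x + (n : ℤ)) y)) = fun y => tW (t x y) := by
        rw [tW_iter ht hbr x n, Hext]
      have h1 : ∀ z : ℕ, tW (t (x + (n : ℤ)) z) = tW (t x z) := fun z => congrFun hW z
      rw [tile_shape (ht (x + (n : ℤ)) y).1 (tS_run ht hbr (x + (n : ℤ)) y),
        tile_shape (ht x y).1 (tS_run ht hbr x y)]
      simp only [h1]

end AutomataPaper
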